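/- Let W = { v ∈ ℤ^d : ‖v‖ ≤ p } for some p ≥ 1, and let ℤW = { n·w : n ∈ ℤ, w ∈ W }. If d ≥ 2, then there exists an infinite set V ⊆ ℤ^d such that v − w ∉ ℤW + W + W for all distinct v, w ∈ V. -/
import Mathlib

private lemma key_avoid (p : ℕ) (hp : 1 ≤ p) (k j n a0 a1 b0 b1 c0 c1 : ℤ)
    (hj : 1 ≤ j) (hk : j < k)
    (ha0 : |a0| ≤ (p : ℤ)) (ha1 : |a1| ≤ (p : ℤ)) (hb0 : |b0| ≤ (p : ℤ))
    (hb1 : |b1| ≤ (p : ℤ)) (hc0 : |c0| ≤ (p : ℤ)) (hc1 : |c1| ≤ (p : ℤ))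
    (e0 : (2*(p:ℤ)+1)*(k-j) = n*a0 + b0 + c0)
    (e1 : ((2*(p:ℤ)+1)*k)^2 - ((2*(p:ℤ)+1)*j)^2 = n*a1 + b1 + c1) : False := by
  have hp' : (1:ℤ) ≤ (p:ℤ) := by exact_mod_cast hp
  set D : ℤ := (2*(p:ℤ)+1)*(k-j) with hD
  set S : ℤ := (2*(p:ℤ)+1)*(k+j) with hS
  have hDpos : 2*(p:ℤ)+1 ≤ D := by
    have : 1 ≤ k - j := by omega
    nlinarith
  have hSge : 3*(2*(p:ℤ)+1) ≤ S := by
    have : 3 ≤ k + j := by omega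
    nlinarith
  have e1' : D * S = n*a1 + b1 + c1 := by rw [hD, hS]; linarith [e1, sq_nonneg (0:ℤ)]
  rcases abs_le.mp ha0 with ⟨ha0l, ha0r⟩
  rcases abs_le.mp ha1 with ⟨ha1l, ha1r⟩
  rcases abs_le.mp hb0 with ⟨hb0l, hb0r⟩
  rcases abs_le.mp hb1 with ⟨hb1l, hb1r⟩
  rcases abs_le.mp hc0 with ⟨hc0l, hc0r⟩
  rcases abs_le.mp hc1 with ⟨hc1l, hc1r⟩
  rcases eq_or_ne a0 0 with h0 | h0
  · -- a0 = 0 : then D = b0 + c0 ≤ 2p < D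
    subst h0
    simp at e0
    nlinarith
  · have habs : 1 ≤ |a0| := Int.one_le_abs h0
    -- key quantity
    have hkey : a1 * D - a0 * (D * S) = a1*(b0+c0) - a0*(b1+c1) := by
      linear_combination a1 * e0 - a0 * e1'
    have m1 : |a1*b0| ≤ (p:ℤ)*p := by
      rw [abs_mul]; exact mul_le_mul ha1 hb0 (abs_nonneg _) (by positivity)
    have m2 : |a1*c0| ≤ (p:ℤ)*p := by
      rw [abs_mul]; exact mul_le_mul ha1 hc0 (abs_nonneg _) (by positivity)
    have m3 : |a0*b1| ≤ (p:ℤ)*p := by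
      rw [abs_mul]; exact mul_le_mul ha0 hb1 (abs_nonneg _) (by positivity)
    have m4 : |a0*c1| ≤ (p:ℤ)*p := by
      rw [abs_mul]; exact mul_le_mul ha0 hc1 (abs_nonneg _) (by positivity)
    rcases abs_le.mp m1 with ⟨m1l, m1r⟩
    rcases abs_le.mp m2 with ⟨m2l, m2r⟩
    rcases abs_le.mp m3 with ⟨m3l, m3r⟩
    rcases abs_le.mp m4 with ⟨m4l, m4r⟩
    have hub : |a1 * D - a0 * (D * S)| ≤ 4*(p:ℤ)*p := by
      have hexp : a1*(b0+c0) - a0*(b1+c1) = a1*b0 + a1*c0 - a0*b1 - a0*c1 := by ring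
      rw [hkey, hexp, abs_le]
      constructor <;> linarith
    have hSpos : (0:ℤ) < S := by linarith
    have hDpos' : (0:ℤ) < D := by linarith
    have hlb : S - (p:ℤ) ≤ |a1 - a0 * S| := by
      have h1 : S ≤ |a0 * S| := by
        rw [abs_mul, abs_of_pos hSpos]
        have := mul_le_mul_of_nonneg_right habs hSpos.le
        linarith
      have h2 : |a0*S| - |a1| ≤ |a1 - a0*S| := by
        rw [abs_sub_comm]
        exact abs_sub_abs_le_abs_sub _ _
      linarith
    have hfact : |a1 * D - a0 * (D * S)| = D * |a1 - a0 * S| := by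
      have : a1 * D - a0 * (D * S) = D * (a1 - a0 * S) := by ring
      rw [this, abs_mul, abs_of_pos hDpos']
    rw [hfact] at hub
    have hfin : D * (S - (p:ℤ)) ≤ D * |a1 - a0*S| :=
      mul_le_mul_of_nonneg_left hlb hDpos'.le
    have h5 : 5*(p:ℤ)+3 ≤ S - p := by linarith
    have h6 : (2*(p:ℤ)+1)*(5*p+3) ≤ D*(S-p) :=
      mul_le_mul hDpos h5 (by linarith) hDpos'.le
    have h7 : (2*(p:ℤ)+1)*(5*p+3) = 10*((p:ℤ)*p) + 11*p + 3 := by ring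
    have h8 : (1:ℤ)*1 ≤ (p:ℤ)*p :=
      mul_le_mul hp' hp' (by linarith) (by linarith)
    linarith

/-- Let `W = {v ∈ ℤ^d : ‖v‖∞ ≤ p}` and `ℤW = {n • w : n ∈ ℤ, w ∈ W}`. If `d ≥ 2`
then there is an infinite set `V ⊆ ℤ^d` with `v - w ∉ ℤW + W + W` for all
distinct `v, w ∈ V`. -/
theorem infinite_set_avoiding_thickened_lines (d p : ℕ) (hd : 2 ≤ d) (hp : 1 ≤ p) :
    ∃ V : Set (Fin d → ℤ), V.Infinite ∧
      ∀ v ∈ V, ∀ w ∈ V, v ≠ w →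
        ¬ ∃ (n : ℤ) (a b c : Fin d → ℤ),
            (∀ i, |a i| ≤ (p : ℤ)) ∧ (∀ i, |b i| ≤ (p : ℤ)) ∧ (∀ i, |c i| ≤ (p : ℤ)) ∧
            v - w = n • a + b + c := by
  set i0 : Fin d := ⟨0, by omega⟩ with hi0
  set i1 : Fin d := ⟨1, by omega⟩ with hi1
  set g : ℕ → (Fin d → ℤ) := fun k i =>
    if i = i0 then (2*(p:ℤ)+1)*((k:ℤ)+1)
    else if i = i1 then ((2*(p:ℤ)+1)*((k:ℤ)+1))^2 else 0 with hg
  have hginj : Function.Injective g := by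
    intro k m h
    have := congrFun h i0
    simp only [hg, if_pos rfl] at this
    have : (k:ℤ) = m := by nlinarith [Nat.cast_nonneg (α := ℤ) k, Nat.cast_nonneg (α := ℤ) m]
    exact_mod_cast this
  -- main avoidance lemma for ordered pair
  have main : ∀ k m : ℕ, m < k →
      ¬ ∃ (n : ℤ) (a b c : Fin d → ℤ),
            (∀ i, |a i| ≤ (p : ℤ)) ∧ (∀ i, |b i| ≤ (p : ℤ)) ∧ (∀ i, |c i| ≤ (p : ℤ)) ∧
            g k - g m = n • a + b + c := by
    rintro k m hkm ⟨n, a, b, c, ha, hb, hc, heq⟩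
    have h01 : i0 ≠ i1 := by simp [hi0, hi1, Fin.ext_iff]
    have e0 := congrFun heq i0
    have e1 := congrFun heq i1
    simp only [hg, Pi.sub_apply, Pi.add_apply, Pi.smul_apply, smul_eq_mul,
      if_pos rfl, if_neg h01, if_true, eq_self_iff_true] at e0 e1
    simp only [h01.symm, if_false, if_pos rfl, if_true, eq_self_iff_true] at e1
    refine key_avoid p hp ((k:ℤ)+1) ((m:ℤ)+1) n (a i0) (a i1) (b i0) (b i1) (c i0) (c i1)
      (by omega) (by exact_mod_cast by omega) (ha i0) (ha i1) (hb i0) (hb i1)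
      (hc i0) (hc i1) ?_ ?_
    · linear_combination e0
    · linear_combination e1
  refine ⟨Set.range g, Set.infinite_range_of_injective hginj, ?_⟩
  rintro v ⟨k, rfl⟩ w ⟨m, rfl⟩ hne ⟨n, a, b, c, ha, hb, hc, heq⟩
  have hkm : k ≠ m := fun h => hne (by rw [h])
  rcases hkm.lt_or_gt with h | h
  · exact main m k h ⟨-n, a, -b, -c, ha,
      fun i => by simpa using hb i, fun i => by simpa using hc i, by
        have : g m - g k = -(g k - g m) := by ring
        rw [this, heq]; funext i; simp; ring⟩
  · exact main k m h ⟨n, a, b, c, ha, hb, hc, heq⟩
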